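/- Let A be a finite-dimensional formally real Jordan algebra (x² + y² = 0 ⟹ x = y = 0) with unit e. Then the set Y = {a² : a ∈ A} of squares is a convex cone satisfying Y ∩ (−Y) = {0} and A = Y − Y. -/

import Mathlib

set_option linter.unusedSectionVars false
open Polynomial LinearMap
section Stmt19
variable {A : Type*} [NonUnitalNonAssocCommRing A] [Module ℝ A]
    [SMulCommClass ℝ A A] [IsScalarTower ℝ A A] [FiniteDimensional ℝ A]

noncomputable def Lop (a : A) : Module.End ℝ A := LinearMap.mul ℝ A a
@[simp] lemma Lop_apply (a b : A) : Lop a b = a * b := rfl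

noncomputable def pw (e a : A) : ℕ → A
  | 0 => e
  | n+1 => a * pw e a n

variable {e : A} (he : ∀ x : A, e * x = x)
variable (hJ : ∀ x y : A, x * x * y * x = x * x * (y * x))

@[simp] lemma pw_zero (a : A) : pw e a 0 = e := rfl
@[simp] lemma pw_succ (a : A) (n : ℕ) : pw e a (n+1) = a * pw e a n := rfl
include he in
lemma pw_one (a : A) : pw e a 1 = a := by
  show a * e = a
  rw [mul_comm, he]

include he in
lemma Lop_e : Lop e = (1 : Module.End ℝ A) := by
  ext t; simp [he]

include hJ in
lemma comm_sq (a : A) : Commute (Lop (a*a)) (Lop a) := by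
  ext t
  show (a*a) * (a * t) = a * ((a*a) * t)
  rw [mul_comm a (a*a*t), hJ a t, mul_comm t a]

lemma halveA {a : A} (h : a + a = 0) : a = 0 := by
  have h2 : (2:ℝ) • a = 0 := by rw [two_smul]; exact h
  calc a = (2⁻¹ * 2 : ℝ) • a := by norm_num
  _ = (2⁻¹:ℝ) • ((2:ℝ) • a) := by rw [mul_smul]
  _ = 0 := by rw [h2, smul_zero]

lemma lemE (hJ' : ∀ x y : A, x * x * y * x = x * x * (y * x)) (x z w y : A) :
    ((x*z)*y)*w + ((x*w)*y)*z + ((z*w)*y)*x = (x*z)*(y*w) + (x*w)*(y*z) + (z*w)*(y*x) := by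
  have key : (((x*z)*y)*w + ((x*w)*y)*z + ((z*w)*y)*x - ((x*z)*(y*w) + (x*w)*(y*z) + (z*w)*(y*x)))
      + (((x*z)*y)*w + ((x*w)*y)*z + ((z*w)*y)*x - ((x*z)*(y*w) + (x*w)*(y*z) + (z*w)*(y*x))) = 0 := by
    have h1 := hJ' (x+z+w) y
    have h2 := hJ' (x+z) y
    have h3 := hJ' (x+w) y
    have h4 := hJ' (z+w) y
    have h5 := hJ' x y
    have h6 := hJ' z y
    have h7 := hJ' w y
    simp only [mul_add, add_mul, mul_comm z x, mul_comm w x, mul_comm w z] at h1 h2 h3 h4 h5 h6 h7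
    linear_combination (norm := abel1) h1 - h2 - h3 - h4 + h5 + h6 + h7
  exact sub_eq_zero.mp (halveA key)

lemma lemE' (hJ' : ∀ x y : A, x * x * y * x = x * x * (y * x)) (u x y t : A) :
    ((u*x)*y)*t = (u*x)*(y*t) + (u*t)*(y*x) + (x*t)*(y*u) - ((u*t)*y)*x - ((x*t)*y)*u := by
  have h := lemE hJ' u x t y
  linear_combination (norm := abel1) h

lemma IIop (hE' : ∀ u x y t : A, ((u*x)*y)*t = (u*x)*(y*t) + (u*t)*(y*x) + (x*t)*(y*u) - ((u*t)*y)*x - ((x*t)*y)*u)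
    (u x y : A) :
    Lop ((u*x)*y) = Lop (u*x) * Lop y + Lop (y*x) * Lop u + Lop (y*u) * Lop x
      - Lop x * Lop y * Lop u - Lop u * Lop y * Lop x := by
  ext t
  simp only [LinearMap.sub_apply, LinearMap.add_apply, Module.End.mul_apply, Lop_apply]
  rw [hE' u x y t]
  simp [mul_comm]

include he hJ in
lemma pw_comm_aux
    (hII : ∀ u x y : A, Lop ((u*x)*y) = Lop (u*x) * Lop y + Lop (y*x) * Lop u + Lop (y*u) * Lop x
      - Lop x * Lop y * Lop u - Lop u * Lop y * Lop x) (a : A) :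
    ∀ n, (Commute (Lop a) (Lop (pw e a n)) ∧ Commute (Lop (a*a)) (Lop (pw e a n)))
       ∧ (Commute (Lop a) (Lop (pw e a (n+1))) ∧ Commute (Lop (a*a)) (Lop (pw e a (n+1)))) := by
  have hrec : ∀ n : ℕ, Lop (pw e a (n+2)) = Lop (pw e a (n+1)) * Lop a + Lop (a*a) * Lop (pw e a n)
      + Lop (pw e a (n+1)) * Lop a - Lop a * Lop a * Lop (pw e a n)
      - Lop (pw e a n) * Lop a * Lop a := by
    intro n
    have h := hII (pw e a n) a a
    have h1 : pw e a n * a = pw e a (n+1) := by rw [mul_comm]; rfl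
    have h2 : pw e a (n+1) * a = pw e a (n+2) := by rw [mul_comm]; rfl
    rw [h1, h2] at h
    rw [h]
    rfl
  intro n
  induction n with
  | zero =>
    constructor
    · constructor <;> · rw [pw_zero, Lop_e he]; exact Commute.one_right _
    · rw [pw_succ, pw_zero, mul_comm, he]
      exact ⟨Commute.refl _, comm_sq hJ a⟩
  | succ n ih =>
    obtain ⟨⟨c1, c2⟩, ⟨c3, c4⟩⟩ := ih
    refine ⟨⟨c3, c4⟩, ?_, ?_⟩
    · rw [hrec n]
      have t1 : Commute (Lop a) (Lop (pw e a (n+1)) * Lop a) := c3.mul_right (Commute.refl _)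
      have t2 : Commute (Lop a) (Lop (a*a) * Lop (pw e a n)) :=
        ((comm_sq hJ a).symm).mul_right c1
      have t4 : Commute (Lop a) (Lop a * Lop a * Lop (pw e a n)) :=
        ((Commute.refl (Lop a)).mul_right (Commute.refl _)).mul_right c1
      have t5 : Commute (Lop a) (Lop (pw e a n) * Lop a * Lop a) :=
        (c1.mul_right (Commute.refl _)).mul_right (Commute.refl _)
      exact (((t1.add_right t2).add_right t1).sub_right t4).sub_right t5
    · rw [hrec n]
      have c0 := comm_sq hJ a
      have s1 : Commute (Lop (a*a)) (Lop (pw e a (n+1)) * Lop a) := c4.mul_right c0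
      have s2 : Commute (Lop (a*a)) (Lop (a*a) * Lop (pw e a n)) :=
        (Commute.refl _).mul_right c2
      have s4 : Commute (Lop (a*a)) (Lop a * Lop a * Lop (pw e a n)) :=
        (c0.mul_right c0).mul_right c2
      have s5 : Commute (Lop (a*a)) (Lop (pw e a n) * Lop a * Lop a) :=
        (c2.mul_right c0).mul_right c0
      exact (((s1.add_right s2).add_right s1).sub_right s4).sub_right s5

include he hJ in
lemma pw_mul
    (hII : ∀ u x y : A, Lop ((u*x)*y) = Lop (u*x) * Lop y + Lop (y*x) * Lop u + Lop (y*u) * Lop x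
      - Lop x * Lop y * Lop u - Lop u * Lop y * Lop x) (a : A) :
    ∀ i j, pw e a i * pw e a j = pw e a (i+j) := by
  have c : ∀ n, Commute (Lop a) (Lop (pw e a n)) := fun n => (pw_comm_aux he hJ hII a n).1.1
  intro i
  induction i with
  | zero => intro j; rw [pw_zero, he, Nat.zero_add]
  | succ i ih =>
    intro j
    have step : pw e a (i+1) * pw e a j = a * (pw e a i * pw e a j) := by
      have hcomm := congrFun (congrArg DFunLike.coe (c j).symm.eq) (pw e a i)
      simp only [Module.End.mul_apply, Lop_apply] at hcomm
      calc pw e a (i+1) * pw e a j = pw e a j * (a * pw e a i) := by rw [mul_comm]; rfl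
      _ = a * (pw e a j * pw e a i) := hcomm
      _ = a * (pw e a i * pw e a j) := by rw [mul_comm (pw e a j)]
    rw [step, ih j]
    have : i + 1 + j = (i + j) + 1 := by omega
    rw [this]
    rfl

noncomputable def ev (e a : A) (p : ℝ[X]) : A := p.sum fun n c => c • pw e a n

lemma ev_add (a : A) (p q : ℝ[X]) : ev e a (p+q) = ev e a p + ev e a q :=
  Polynomial.sum_add_index p q _ (fun _ => zero_smul _ _) (fun _ b₁ b₂ => add_smul b₁ b₂ _)

lemma ev_monomial (a : A) (n : ℕ) (c : ℝ) : ev e a (monomial n c) = c • pw e a n :=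
  Polynomial.sum_monomial_index c _ (zero_smul _ _)

include he hJ in
lemma ev_mul
    (hII : ∀ u x y : A, Lop ((u*x)*y) = Lop (u*x) * Lop y + Lop (y*x) * Lop u + Lop (y*u) * Lop x
      - Lop x * Lop y * Lop u - Lop u * Lop y * Lop x) (a : A) (p q : ℝ[X]) :
    ev e a (p * q) = ev e a p * ev e a q := by
  induction p using Polynomial.induction_on' with
  | add p1 p2 h1 h2 => rw [add_mul, ev_add, ev_add, h1, h2, add_mul]
  | monomial n c =>
    induction q using Polynomial.induction_on' with
    | add q1 q2 h1 h2 => rw [mul_add, ev_add, ev_add, h1, h2, mul_add]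
    | monomial m d =>
      rw [monomial_mul_monomial, ev_monomial, ev_monomial, ev_monomial,
        smul_mul_smul_comm, pw_mul he hJ hII]

include he in
lemma ev_one (a : A) : ev e a 1 = e := by
  rw [← Polynomial.monomial_zero_one, ev_monomial, one_smul, pw_zero]

include he in
lemma ev_X (a : A) : ev e a X = a := by
  rw [← Polynomial.monomial_one_one_eq_X, ev_monomial, one_smul, pw_one he]

include he in
lemma ev_C (a : A) (r : ℝ) : ev e a (C r) = r • e := by
  rw [← Polynomial.monomial_zero_left, ev_monomial, pw_zero]

lemma ev_zero (a : A) : ev e a 0 = 0 := by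
  unfold ev; simp

noncomputable def Tr (a : A) : ℝ := LinearMap.trace ℝ A (Lop a)

lemma Lop_add' (a b : A) : Lop (a + b) = Lop a + Lop b := by ext c; simp [add_mul]
lemma Lop_smul' (r : ℝ) (a : A) : Lop (r • a) = r • Lop a := by ext c; simp [smul_mul_assoc]
lemma Lop_zero : Lop (0 : A) = 0 := by ext c; simp

lemma Tr_add (a b : A) : Tr (a + b) = Tr a + Tr b := by
  unfold Tr; rw [Lop_add', map_add]
lemma Tr_smul (r : ℝ) (a : A) : Tr (r • a) = r * Tr a := by
  unfold Tr; rw [Lop_smul', map_smul, smul_eq_mul]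
lemma Tr_zero : Tr (0 : A) = 0 := by unfold Tr; rw [Lop_zero, map_zero]
lemma Tr_sub (a b : A) : Tr (a - b) = Tr a - Tr b := by
  unfold Tr
  have : Lop (a - b) = Lop a - Lop b := by ext c; simp [sub_mul]
  rw [this, map_sub]

lemma Tsym
    (hII : ∀ u x y : A, Lop ((u*x)*y) = Lop (u*x) * Lop y + Lop (y*x) * Lop u + Lop (y*u) * Lop x
      - Lop x * Lop y * Lop u - Lop u * Lop y * Lop x) (u x y : A) :
    Tr ((u*x)*y) = Tr ((y*x)*u) := by
  unfold Tr
  rw [hII u x y, hII y x u]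
  simp only [map_add, map_sub]
  rw [mul_comm y u]
  rw [LinearMap.trace_mul_cycle ℝ (Lop x) (Lop y) (Lop u),
    LinearMap.trace_mul_cycle ℝ (Lop u) (Lop x) (Lop y),
    LinearMap.trace_mul_cycle ℝ (Lop u) (Lop y) (Lop x)]
  ring

lemma Tassoc
    (hII : ∀ u x y : A, Lop ((u*x)*y) = Lop (u*x) * Lop y + Lop (y*x) * Lop u + Lop (y*u) * Lop x
      - Lop x * Lop y * Lop u - Lop u * Lop y * Lop x) (a b c : A) :
    Tr ((a*b)*c) = Tr (a*(b*c)) := by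
  rw [Tsym hII a b c, mul_comm c b, mul_comm (b*c) a]

lemma trace_idem (P : Module.End ℝ A) (h : P * P = P) :
    LinearMap.trace ℝ A P = (Module.finrank ℝ (LinearMap.range P) : ℝ) := by
  have hproj : LinearMap.IsProj (LinearMap.range P) P :=
    ⟨fun x => LinearMap.mem_range_self P x,
     fun x hx => by obtain ⟨y, rfl⟩ := hx; exact congrFun (congrArg DFunLike.coe h) y⟩
  conv_lhs => rw [hproj.eq_conj_prodMap]
  rw [LinearMap.trace_conj', LinearMap.trace_prodMap', LinearMap.trace_id, map_zero, add_zero]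

lemma halveE {M : Type*} [AddCommGroup M] [Module ℝ M] {a b : M} (h : a + a = b) :
    a = (2⁻¹:ℝ) • b := by
  rw [← h, ← two_smul ℝ a, smul_smul]
  norm_num

include hJ he in
lemma Tidem_pos
    (hII : ∀ u x y : A, Lop ((u*x)*y) = Lop (u*x) * Lop y + Lop (y*x) * Lop u + Lop (y*u) * Lop x
      - Lop x * Lop y * Lop u - Lop u * Lop y * Lop x)
    (f : A) (hf : f * f = f) (hfne : f ≠ 0) : 0 < Tr f := by
  set F := Lop f with hF
  have heq : F = F*F + F*F + F*F - F*(F*F) - F*(F*F) := by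
    have h := hII f f f
    simp only [hf] at h
    simp only [mul_assoc] at h
    exact h
  have h2 : F*(F*F) + F*(F*F) = F*F + F*F + F*F - F := by
    linear_combination (norm := abel1) heq
  have hcube : F*(F*F) = (2⁻¹:ℝ) • (F*F + F*F + F*F - F) := halveE h2
  have h4pre := congrArg (fun t : Module.End ℝ A => F * t) h2
  simp only [mul_add, mul_sub] at h4pre
  have h4 : F*(F*(F*F)) = (2⁻¹:ℝ) • (F*(F*F) + F*(F*F) + F*(F*F) - F*F) := halveE h4pre
  set P2 : Module.End ℝ A := (4:ℝ)•F - (4:ℝ)•(F*F) with hP2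
  set P1 : Module.End ℝ A := (2:ℝ)•(F*F) - F with hP1
  have hP2idem : P2 * P2 = P2 := by
    rw [hP2]
    simp only [sub_mul, mul_sub, smul_mul_assoc, mul_smul_comm, smul_smul, mul_assoc]
    rw [h4, hcube]
    match_scalars <;> norm_num
  have hP1idem : P1 * P1 = P1 := by
    rw [hP1]
    simp only [sub_mul, mul_sub, smul_mul_assoc, mul_smul_comm, smul_smul, mul_assoc]
    rw [h4, hcube]
    match_scalars <;> norm_num
  have hFP : F = (2⁻¹:ℝ) • P2 + P1 := by
    rw [hP2, hP1]
    match_scalars <;> norm_num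
  have hP1f : P1 f = f := by
    rw [hP1]
    simp only [LinearMap.sub_apply, LinearMap.smul_apply, Module.End.mul_apply, hF, Lop_apply, hf]
    rw [two_smul]
    abel
  have hP1ne : P1 ≠ 0 := fun h0 => hfne (by rw [h0] at hP1f; simpa using hP1f.symm)
  have hrange : LinearMap.range P1 ≠ ⊥ :=
    fun hb => hP1ne (LinearMap.range_eq_bot.mp hb)
  have hrank1 : 0 < Module.finrank ℝ (LinearMap.range P1) :=
    Nat.pos_of_ne_zero (fun h0 => hrange (Submodule.finrank_eq_zero.mp h0))
  have htr : Tr f = (2⁻¹:ℝ) * LinearMap.trace ℝ A P2 + LinearMap.trace ℝ A P1 := by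
    unfold Tr
    rw [← hF, hFP, map_add, map_smul, smul_eq_mul]
  rw [htr, trace_idem P2 hP2idem, trace_idem P1 hP1idem]
  have hr2 : (0:ℝ) ≤ Module.finrank ℝ (LinearMap.range P2) := by positivity
  have hr1 : (1:ℝ) ≤ Module.finrank ℝ (LinearMap.range P1) := by exact_mod_cast hrank1
  linarith

include he hJ in
lemma ev_C_mul
    (hII : ∀ u x y : A, Lop ((u*x)*y) = Lop (u*x) * Lop y + Lop (y*x) * Lop u + Lop (y*u) * Lop x
      - Lop x * Lop y * Lop u - Lop u * Lop y * Lop x) (a : A) (c : ℝ) (p : ℝ[X]) :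
    ev e a (C c * p) = c • ev e a p := by
  rw [ev_mul he hJ hII, ev_C he, smul_mul_assoc, he]

lemma ev_sum (a : A) {ι : Type*} (s : Finset ι) (F : ι → ℝ[X]) :
    ev e a (∑ i ∈ s, F i) = ∑ i ∈ s, ev e a (F i) := by
  classical
  induction s using Finset.cons_induction with
  | empty => simp [ev_zero]
  | cons i s his ih => rw [Finset.sum_cons, Finset.sum_cons, ev_add, ih]

include he hJ in
lemma spectral
    (hII : ∀ u x y : A, Lop ((u*x)*y) = Lop (u*x) * Lop y + Lop (y*x) * Lop u + Lop (y*u) * Lop x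
      - Lop x * Lop y * Lop u - Lop u * Lop y * Lop x)
    (hFR : ∀ x y : A, x * x + y * y = 0 → x = 0 ∧ y = 0)
    (a : A) :
    ∃ (n : ℕ) (lam : Fin n → ℝ) (f : Fin n → A),
      (∀ i, f i * f i = f i) ∧ (∀ i j, i ≠ j → f i * f j = 0) ∧
      (∀ i, f i ≠ 0) ∧ a = ∑ i, lam i • f i := by
  classical
  by_cases hA : e = 0
  · refine ⟨0, Fin.elim0, Fin.elim0, fun i => i.elim0, fun i => i.elim0, fun i => i.elim0, ?_⟩
    have ha : a = 0 := by rw [← he a, hA, zero_mul]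
    simp [ha]
  -- the evaluation-kernel ideal
  set I : Ideal ℝ[X] :=
    { carrier := {p | ev e a p = 0}
      add_mem' := fun {p} {q} hp hq => by
        simp only [Set.mem_setOf_eq] at *
        rw [ev_add, hp, hq, add_zero]
      zero_mem' := by simp only [Set.mem_setOf_eq]; exact ev_zero a
      smul_mem' := fun c {p} hp => by
        simp only [Set.mem_setOf_eq] at *
        rw [smul_eq_mul, mul_comm, ev_mul he hJ hII, hp, zero_mul] } with hI
  have memI : ∀ p : ℝ[X], p ∈ I ↔ ev e a p = 0 := fun p => Iff.rfl
  -- a nonzero element of the kernel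
  obtain ⟨p₀, hp₀I, hp₀ne⟩ : ∃ p₀ : ℝ[X], p₀ ∈ I ∧ p₀ ≠ 0 := by
    set d := Module.finrank ℝ A with hd
    have hdep : ¬ LinearIndependent ℝ (fun i : Fin (d+1) => pw e a i) := by
      intro hli
      have := hli.fintype_card_le_finrank
      simp only [Fintype.card_fin] at this
      omega
    rw [Fintype.not_linearIndependent_iff] at hdep
    obtain ⟨g, hg, i, hgi⟩ := hdep
    refine ⟨∑ j : Fin (d+1), monomial (j : ℕ) (g j), ?_, ?_⟩
    · rw [memI, ev_sum]
      simpa only [ev_monomial] using hg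
    · intro h0
      have := congrArg (fun p => Polynomial.coeff p (i : ℕ)) h0
      simp only [Polynomial.finset_sum_coeff, Polynomial.coeff_monomial,
        Polynomial.coeff_zero] at this
      rw [Finset.sum_eq_single i (fun j _ hji => by
            rw [if_neg (fun hc => hji (Fin.val_injective hc))])
          (fun hni => absurd (Finset.mem_univ i) hni)] at this
      simp at this
      exact hgi this
  -- the monic minimal polynomial
  have hIP : I.IsPrincipal := IsPrincipalIdealRing.principal I
  set m₀ : ℝ[X] := Submodule.IsPrincipal.generator I with hm₀
  have hm₀mem : m₀ ∈ I := Submodule.IsPrincipal.generator_mem I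
  have hspan : Ideal.span {m₀} = I := Ideal.span_singleton_generator I
  have hdvd₀ : ∀ p : ℝ[X], p ∈ I ↔ m₀ ∣ p := by
    intro p
    rw [← hspan, Ideal.mem_span_singleton]
  have hm₀ne : m₀ ≠ 0 := by
    intro h0
    apply hp₀ne
    have := (hdvd₀ p₀).mp hp₀I
    rwa [h0, zero_dvd_iff] at this
  set m : ℝ[X] := m₀ * C (m₀.leadingCoeff)⁻¹ with hm
  have hmonic : m.Monic := Polynomial.monic_mul_leadingCoeff_inv hm₀ne
  have hmne : m ≠ 0 := hmonic.ne_zero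
  have hd1 : m₀ ∣ m := ⟨_, rfl⟩
  have hd2 : m ∣ m₀ := ⟨C m₀.leadingCoeff, by
    rw [hm, mul_assoc, ← map_mul, inv_mul_cancel₀ (Polynomial.leadingCoeff_ne_zero.mpr hm₀ne),
      map_one, mul_one]⟩
  have hdvd : ∀ p : ℝ[X], ev e a p = 0 ↔ m ∣ p := by
    intro p
    rw [← memI, hdvd₀]
    exact ⟨fun h => hd2.trans h, fun h => hd1.trans h⟩
  have hevm : ev e a m = 0 := (hdvd m).mpr dvd_rfl
  have hdeg1 : 1 ≤ m.natDegree := by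
    by_contra hcon
    push_neg at hcon
    interval_cases h : m.natDegree
    · have : m = 1 := hmonic.natDegree_eq_zero.mp h
      rw [this, ev_one he] at hevm
      exact hA hevm
  -- m is squarefree
  have hsf : Squarefree m := by
    intro x hx
    by_contra hxu
    obtain ⟨r, hr⟩ := hx
    have hx0 : x ≠ 0 := by rintro rfl; rw [mul_zero, zero_mul] at hr; exact hmne hr
    have hr0 : r ≠ 0 := by rintro rfl; rw [mul_zero] at hr; exact hmne hr
    have hdx : 1 ≤ x.natDegree := by
      by_contra hc
      push_neg at hc
      interval_cases h : x.natDegree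
      · have hxC := Polynomial.eq_C_of_natDegree_eq_zero h
        have hc0 : x.coeff 0 ≠ 0 := fun hc0 => hx0 (by rw [hxC, hc0, map_zero])
        exact hxu (by rw [hxC]; exact Polynomial.isUnit_C.mpr (IsUnit.mk0 _ hc0))
    have hxr : ev e a (x*r) = 0 := by
      have hsq : (x*r)*(x*r) = m*r := by rw [hr]; ring
      have : ev e a (x*r) * ev e a (x*r) + (0:A) * 0 = 0 := by
        rw [← ev_mul he hJ hII, hsq, ev_mul he hJ hII, hevm, zero_mul, mul_zero, add_zero]
      exact (hFR _ _ this).1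
    have hmdvdxr : m ∣ x*r := (hdvd _).mp hxr
    have hxrne : x*r ≠ 0 := mul_ne_zero hx0 hr0
    have hle := Polynomial.natDegree_le_of_dvd hmdvdxr hxrne
    rw [Polynomial.natDegree_mul hx0 hr0] at hle
    have : m.natDegree = x.natDegree + x.natDegree + r.natDegree := by
      rw [hr, Polynomial.natDegree_mul (mul_ne_zero hx0 hx0) hr0,
        Polynomial.natDegree_mul hx0 hx0]
    omega
  -- m splits over ℝ
  have hsplits : m.Splits := by
    rw [Polynomial.splits_iff_splits]
    refine Or.inr ?_
    intro g hgirr hgdvd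
    have hgdeg2 := hgirr.natDegree_le_two
    have hgne : g ≠ 0 := hgirr.ne_zero
    have hgdeg1 : 1 ≤ g.natDegree := by
      by_contra hc
      push_neg at hc
      interval_cases h : g.natDegree
      · have hgC := Polynomial.eq_C_of_natDegree_eq_zero h
        have hc0 : g.coeff 0 ≠ 0 := fun hc0 => hgne (by rw [hgC, hc0, map_zero])
        exact hgirr.not_isUnit (by rw [hgC]; exact Polynomial.isUnit_C.mpr (IsUnit.mk0 _ hc0))
    rcases (by omega : g.natDegree = 1 ∨ g.natDegree = 2) with hdeg | hdeg
    · rw [Polynomial.degree_eq_natDegree hgne, hdeg]; rfl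
    exfalso
    -- g has no real root
    have hnoroot : ∀ t : ℝ, g.eval t ≠ 0 := by
      intro t ht
      obtain ⟨k, hk⟩ := (Polynomial.dvd_iff_isRoot.mpr ht)
      rcases hgirr.isUnit_or_isUnit hk with hu | hu
      · exact Polynomial.not_isUnit_X_sub_C t hu
      · have hk0 : k ≠ 0 := fun h0 => hgne (by rw [hk, h0, mul_zero])
        have : g.natDegree = 1 + k.natDegree := by
          rw [hk, Polynomial.natDegree_mul (Polynomial.X_sub_C_ne_zero t) hk0,
            Polynomial.natDegree_X_sub_C]
        have hk1 : k.natDegree = 0 := Polynomial.natDegree_eq_zero_of_isUnit hu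
        omega
    -- monicize
    set q : ℝ[X] := g * C (g.leadingCoeff)⁻¹ with hqdef
    have hqmonic : q.Monic := Polynomial.monic_mul_leadingCoeff_inv hgne
    have hlcne : g.leadingCoeff ≠ 0 := Polynomial.leadingCoeff_ne_zero.mpr hgne
    have hqg : q ∣ g := ⟨C g.leadingCoeff, by
      rw [hqdef, mul_assoc, ← map_mul, inv_mul_cancel₀ hlcne, map_one, mul_one]⟩
    have hqdvd : q ∣ m := hqg.trans hgdvd
    have hqdeg : q.natDegree = 2 := by
      rw [hqdef, Polynomial.natDegree_mul hgne (fun h0 => (inv_ne_zero hlcne)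
        (by rwa [← Polynomial.C_eq_zero])), Polynomial.natDegree_C, add_zero, hdeg]
    have hqnoroot : ∀ t : ℝ, q.eval t ≠ 0 := by
      intro t ht
      rw [hqdef, Polynomial.eval_mul, Polynomial.eval_C, mul_eq_zero] at ht
      rcases ht with h | h
      · exact hnoroot t h
      · exact inv_ne_zero hlcne h
    set b : ℝ := q.coeff 1 with hbdef
    set γ : ℝ := q.coeff 0 with hγdef
    set α : ℝ := -b/2 with hαdef
    have hb : b = -(2*α) := by rw [hαdef]; ring
    have hqsum : q = X^2 + (C b * X + C γ) := by
      have h0 := hqmonic.as_sum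
      rw [hqdeg] at h0
      rw [h0, Finset.sum_range_succ, Finset.sum_range_one]
      simp only [pow_zero, mul_one, pow_one]
      ring
    have heval : ∀ t : ℝ, q.eval t = t^2 + b*t + γ := by
      intro t
      rw [hqsum]
      simp [Polynomial.eval_add, Polynomial.eval_pow]
      ring
    have hpos : 0 < γ - α^2 := by
      rcases lt_trichotomy (γ - α^2) 0 with hneg | hz | hp
      · exfalso
        set s := Real.sqrt (α^2 - γ) with hsdef
        have hs : s^2 = α^2 - γ := Real.sq_sqrt (by linarith)
        apply hqnoroot (α + s)
        rw [heval, hb]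
        nlinarith [hs]
      · exfalso
        apply hqnoroot α
        rw [heval, hb]
        nlinarith
      · exact hp
    set β := Real.sqrt (γ - α^2) with hβdef
    have hβ : β^2 = γ - α^2 := Real.sq_sqrt hpos.le
    have hβne : β ≠ 0 := ne_of_gt (Real.sqrt_pos.mpr hpos)
    have hqform : q = (X - C α)^2 + C (β^2) := by
      rw [hβ, hqsum, hb]
      simp only [map_sub, map_neg, map_mul, map_pow, map_ofNat]
      ring
    obtain ⟨r, hr⟩ := hqdvd
    have hr0 : r ≠ 0 := fun h0 => hmne (by rw [hr, h0, mul_zero])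
    have key : ((X - C α)*r)*((X - C α)*r) + ((C β*r)*(C β*r)) = m * r := by
      rw [hr, hqform, map_pow]; ring
    have huv : ev e a ((X - C α)*r) * ev e a ((X - C α)*r)
        + ev e a (C β*r) * ev e a (C β*r) = 0 := by
      rw [← ev_mul he hJ hII, ← ev_mul he hJ hII, ← ev_add, key,
        ev_mul he hJ hII, hevm, zero_mul]
    have hv := (hFR _ _ huv).2
    rw [ev_C_mul he hJ hII] at hv
    have hevr : ev e a r = 0 := by
      rcases smul_eq_zero.mp hv with h | h
      · exact absurd h hβne
      · exact h
    have hmr : m ∣ r := (hdvd r).mp hevr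
    have hler := Polynomial.natDegree_le_of_dvd hmr hr0
    have : m.natDegree = 2 + r.natDegree := by
      rw [hr, Polynomial.natDegree_mul hqmonic.ne_zero hr0, hqdeg]
    omega
  -- roots of m
  have hsep : m.Separable := (PerfectField.separable_iff_squarefree).mpr hsf
  have hnodup : m.roots.Nodup := Polynomial.nodup_roots hsep
  have hcardroots : m.roots.card = m.natDegree := (Polynomial.splits_iff_card_roots).mp hsplits
  set T : Finset ℝ := m.roots.toFinset with hT
  have hTval : T.val = m.roots := by
    rw [hT, Multiset.toFinset_val, Multiset.dedup_eq_self.mpr hnodup]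
  have hTcard : T.card = m.natDegree := by
    rw [Finset.card_def, hTval, hcardroots]
  have hTne : T.Nonempty := by
    rw [← Finset.card_pos, hTcard]; omega
  have hprodm : m = ∏ r ∈ T, (X - C r) := by
    conv_lhs => rw [hsplits.eq_prod_roots_of_monic hmonic, ← hTval]
    rw [Finset.prod_eq_multiset_prod]
  have hdvdroots : ∀ p : ℝ[X], (∀ r ∈ T, p.eval r = 0) → m ∣ p := by
    intro p hp
    rw [hprodm]
    apply Finset.prod_dvd_of_coprime
    · intro x hx y hy hxy
      exact (Polynomial.pairwise_coprime_X_sub_C Function.injective_id) hxy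
    · intro r hr
      exact Polynomial.dvd_iff_isRoot.mpr (hp r hr)
  have hinj : Set.InjOn (_root_.id : ℝ → ℝ) ↑T := Function.injective_id.injOn
  set B : ℝ → ℝ[X] := fun r => Lagrange.basis T _root_.id r with hB
  have hBself : ∀ r ∈ T, (B r).eval r = 1 := fun r hr => Lagrange.eval_basis_self hinj hr
  have hBne : ∀ r t : ℝ, r ≠ t → t ∈ T → (B r).eval t = 0 :=
    fun r t hrt ht => Lagrange.eval_basis_of_ne (v := (_root_.id : ℝ → ℝ)) hrt ht
  set F : ℝ → A := fun r => ev e a (B r) with hF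
  -- idempotents
  have hidem : ∀ r ∈ T, F r * F r = F r := by
    intro r hr
    have hdd : m ∣ B r * B r - B r := by
      apply hdvdroots
      intro t ht
      by_cases hrt : r = t
      · subst hrt
        simp [Polynomial.eval_sub, Polynomial.eval_mul, hBself r hr]
      · simp [Polynomial.eval_sub, Polynomial.eval_mul, hBne r t hrt ht]
    obtain ⟨k, hk⟩ := hdd
    have hbb : B r * B r = B r + m * k := by rw [← hk]; ring
    rw [hF]
    show ev e a (B r) * ev e a (B r) = ev e a (B r)
    rw [← ev_mul he hJ hII, hbb, ev_add, ev_mul he hJ hII, hevm, zero_mul, add_zero]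
  have horth : ∀ r ∈ T, ∀ t ∈ T, r ≠ t → F r * F t = 0 := by
    intro r hr t ht hrt
    have hdd : m ∣ B r * B t := by
      apply hdvdroots
      intro s hs
      by_cases hrs : r = s
      · subst hrs
        rw [Polynomial.eval_mul, hBne t r (fun h => hrt h.symm) hr, mul_zero]
      · rw [Polynomial.eval_mul, hBne r s hrs hs, zero_mul]
    obtain ⟨k, hk⟩ := hdd
    rw [hF]
    show ev e a (B r) * ev e a (B t) = 0
    rw [← ev_mul he hJ hII, hk, ev_mul he hJ hII, hevm, zero_mul]
  have hFne : ∀ r ∈ T, F r ≠ 0 := by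
    intro r hr hzero
    have hBr0 : B r ≠ 0 := Lagrange.basis_ne_zero hinj hr
    have hmdvd : m ∣ B r := (hdvd _).mp hzero
    have := Polynomial.natDegree_le_of_dvd hmdvd hBr0
    rw [Lagrange.natDegree_basis hinj hr, ← hTcard] at this
    have := hTne.card_pos
    omega
  have hrepr : a = ∑ r ∈ T, r • F r := by
    have hdd : m ∣ X - ∑ r ∈ T, C r * B r := by
      apply hdvdroots
      intro t ht
      rw [Polynomial.eval_sub, Polynomial.eval_X, Polynomial.eval_finset_sum]
      rw [Finset.sum_eq_single t (fun s hs hst => by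
            rw [Polynomial.eval_mul, hBne s t hst ht, mul_zero])
          (fun hni => absurd ht hni)]
      rw [Polynomial.eval_mul, Polynomial.eval_C, hBself t ht, mul_one, sub_self]
    obtain ⟨k, hk⟩ := hdd
    have hX : X = (∑ r ∈ T, C r * B r) + m * k := by rw [← hk]; ring
    have := congrArg (ev e a) hX
    rw [ev_X he, ev_add, ev_mul he hJ hII, hevm, zero_mul, add_zero, ev_sum] at this
    rw [this]
    apply Finset.sum_congr rfl
    intro r hr
    rw [ev_C_mul he hJ hII]
  -- package with Fin indexing
  set n := T.card with hn
  set τ : Fin n → T := fun i => T.equivFin.symm i with hτ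
  refine ⟨n, fun i => (τ i : ℝ), fun i => F (τ i), ?_, ?_, ?_, ?_⟩
  · intro i; exact hidem _ (τ i).2
  · intro i j hij
    apply horth _ (τ i).2 _ (τ j).2
    intro hc
    exact hij (T.equivFin.symm.injective (Subtype.coe_injective hc))
  · intro i; exact hFne _ (τ i).2
  · rw [hrepr, ← Finset.sum_coe_sort T (fun r => r • F r)]
    exact (Fintype.sum_equiv T.equivFin.symm _ _ (fun i => rfl)).symm
lemma sq_of_orth {n : ℕ} (lam : Fin n → ℝ) (f : Fin n → A)
    (hidem : ∀ i, f i * f i = f i) (horth : ∀ i j, i ≠ j → f i * f j = 0) :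
    (∑ i, lam i • f i) * (∑ i, lam i • f i) = ∑ i, (lam i * lam i) • f i := by
  rw [Finset.sum_mul_sum]
  apply Finset.sum_congr rfl
  intro i _
  rw [Finset.sum_eq_single i]
  · rw [smul_mul_smul_comm, hidem i]
  · intro j _ hji
    rw [smul_mul_smul_comm, horth i j (fun h => hji h.symm), smul_zero]
  · intro h
    exact absurd (Finset.mem_univ i) h

lemma Tr_sum {ι : Type*} (s : Finset ι) (F : ι → A) :
    Tr (∑ i ∈ s, F i) = ∑ i ∈ s, Tr (F i) := by
  classical
  induction s using Finset.cons_induction with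
  | empty => simp [Tr_zero]
  | cons i s his ih => rw [Finset.sum_cons, Finset.sum_cons, Tr_add, ih]

include he hJ in
lemma Tsq_nonneg
    (hII : ∀ u x y : A, Lop ((u*x)*y) = Lop (u*x) * Lop y + Lop (y*x) * Lop u + Lop (y*u) * Lop x
      - Lop x * Lop y * Lop u - Lop u * Lop y * Lop x)
    (hFR : ∀ x y : A, x * x + y * y = 0 → x = 0 ∧ y = 0)
    (y : A) : 0 ≤ Tr (y * y) := by
  obtain ⟨n, lam, f, hidem, horth, hne, hrep⟩ := spectral he hJ hII hFR y
  rw [hrep, sq_of_orth lam f hidem horth, Tr_sum]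
  apply Finset.sum_nonneg
  intro i _
  rw [Tr_smul]
  have := Tidem_pos he hJ hII (f i) (hidem i) (hne i)
  nlinarith [sq_nonneg (lam i)]

include hJ in
lemma opP
    (hII : ∀ u x y : A, Lop ((u*x)*y) = Lop (u*x) * Lop y + Lop (y*x) * Lop u + Lop (y*u) * Lop x
      - Lop x * Lop y * Lop u - Lop u * Lop y * Lop x)
    (f : A) (hf : f * f = f) :
    (((4:ℝ)•(Lop f) - (4:ℝ)•(Lop f * Lop f)) * ((4:ℝ)•(Lop f) - (4:ℝ)•(Lop f * Lop f))
      = (4:ℝ)•(Lop f) - (4:ℝ)•(Lop f * Lop f)) ∧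
    (((2:ℝ)•(Lop f * Lop f) - Lop f) * ((2:ℝ)•(Lop f * Lop f) - Lop f)
      = (2:ℝ)•(Lop f * Lop f) - Lop f) := by
  set F := Lop f with hFdef
  have heq : F = F*F + F*F + F*F - F*(F*F) - F*(F*F) := by
    have h := hII f f f
    simp only [hf] at h
    simp only [mul_assoc] at h
    exact h
  have h2 : F*(F*F) + F*(F*F) = F*F + F*F + F*F - F := by
    linear_combination (norm := abel1) heq
  have hcube : F*(F*F) = (2⁻¹:ℝ) • (F*F + F*F + F*F - F) := halveE h2
  have h4pre := congrArg (fun t : Module.End ℝ A => F * t) h2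
  simp only [mul_add, mul_sub] at h4pre
  have h4 : F*(F*(F*F)) = (2⁻¹:ℝ) • (F*(F*F) + F*(F*F) + F*(F*F) - F*F) := halveE h4pre
  constructor
  · simp only [sub_mul, mul_sub, smul_mul_assoc, mul_smul_comm, smul_smul, mul_assoc]
    rw [h4, hcube]
    match_scalars <;> norm_num
  · simp only [sub_mul, mul_sub, smul_mul_assoc, mul_smul_comm, smul_smul, mul_assoc]
    rw [h4, hcube]
    match_scalars <;> norm_num

include he hJ in
lemma Tfxx_nonneg
    (hII : ∀ u x y : A, Lop ((u*x)*y) = Lop (u*x) * Lop y + Lop (y*x) * Lop u + Lop (y*u) * Lop x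
      - Lop x * Lop y * Lop u - Lop u * Lop y * Lop x)
    (hFR : ∀ x y : A, x * x + y * y = 0 → x = 0 ∧ y = 0)
    (f : A) (hf : f * f = f) (x : A) : 0 ≤ Tr (f * (x * x)) := by
  have tsa1 : ∀ u w : A, Tr (u * (f*w)) = Tr ((f*u) * w) := by
    intro u w
    rw [← Tassoc hII u f w, mul_comm u f]
  have tsa2 : ∀ u w : A, Tr (u * (f*(f*w))) = Tr ((f*(f*u)) * w) := by
    intro u w
    rw [tsa1 u (f*w), tsa1 (f*u) w]
  have hop := opP hJ hII f hf
  -- elementwise idempotency of the two projections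
  have hgg : ∀ v : A, (4:ℝ)•(f*((4:ℝ)•(f*v) - (4:ℝ)•(f*(f*v))))
      - (4:ℝ)•(f*(f*((4:ℝ)•(f*v) - (4:ℝ)•(f*(f*v)))))
      = (4:ℝ)•(f*v) - (4:ℝ)•(f*(f*v)) := by
    intro v
    have h := congrFun (congrArg DFunLike.coe hop.1) v
    simpa only [Module.End.mul_apply, LinearMap.sub_apply, LinearMap.smul_apply, Lop_apply] using h
  have hgg1 : ∀ v : A, (2:ℝ)•(f*(f*((2:ℝ)•(f*(f*v)) - f*v)))
      - f*((2:ℝ)•(f*(f*v)) - f*v)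
      = (2:ℝ)•(f*(f*v)) - f*v := by
    intro v
    have h := congrFun (congrArg DFunLike.coe hop.2) v
    simpa only [Module.End.mul_apply, LinearMap.sub_apply, LinearMap.smul_apply, Lop_apply] using h
  have hsel : ∀ u w : A, Tr (u * ((4:ℝ)•(f*w) - (4:ℝ)•(f*(f*w))))
      = Tr (((4:ℝ)•(f*u) - (4:ℝ)•(f*(f*u))) * w) := by
    intro u w
    rw [mul_sub, mul_smul_comm, mul_smul_comm, Tr_sub, Tr_smul, Tr_smul,
      sub_mul, smul_mul_assoc, smul_mul_assoc, Tr_sub, Tr_smul, Tr_smul,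
      tsa1 u w, tsa2 u w]
  have hsel1 : ∀ u w : A, Tr (u * ((2:ℝ)•(f*(f*w)) - f*w))
      = Tr (((2:ℝ)•(f*(f*u)) - f*u) * w) := by
    intro u w
    rw [mul_sub, mul_smul_comm, Tr_sub, Tr_smul,
      sub_mul, smul_mul_assoc, Tr_sub, Tr_smul, tsa2 u w, tsa1 u w]
  have step0 : Tr (f * (x*x)) = Tr (x * (f*x)) := by
    rw [mul_comm f (x*x), Tassoc hII x x f, mul_comm x f]
  have hdec : f * x = (2⁻¹:ℝ) • ((4:ℝ)•(f*x) - (4:ℝ)•(f*(f*x))) + ((2:ℝ)•(f*(f*x)) - f*x) := by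
    match_scalars <;> norm_num
  have claim1 : 0 ≤ Tr (x * ((4:ℝ)•(f*x) - (4:ℝ)•(f*(f*x)))) := by
    have hc : Tr (x * ((4:ℝ)•(f*x) - (4:ℝ)•(f*(f*x))))
        = Tr (((4:ℝ)•(f*x) - (4:ℝ)•(f*(f*x))) * ((4:ℝ)•(f*x) - (4:ℝ)•(f*(f*x)))) := by
      conv_lhs => rw [← hgg x]
      exact hsel x ((4:ℝ)•(f*x) - (4:ℝ)•(f*(f*x)))
    rw [hc]
    exact Tsq_nonneg he hJ hII hFR _
  have claim2 : 0 ≤ Tr (x * ((2:ℝ)•(f*(f*x)) - f*x)) := by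
    have hc : Tr (x * ((2:ℝ)•(f*(f*x)) - f*x))
        = Tr (((2:ℝ)•(f*(f*x)) - f*x) * ((2:ℝ)•(f*(f*x)) - f*x)) := by
      conv_lhs => rw [← hgg1 x]
      exact hsel1 x ((2:ℝ)•(f*(f*x)) - f*x)
    rw [hc]
    exact Tsq_nonneg he hJ hII hFR _
  rw [step0, hdec, mul_add, mul_smul_comm, Tr_add, Tr_smul]
  have h2 : (0:ℝ) ≤ 2⁻¹ := by norm_num
  nlinarith [claim1, claim2]

end Stmt19

/-- Let `A` be a finite-dimensional formally real Jordan algebra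
(commutative, satisfying the Jordan identity `((x²)y)x = (x²)(yx)`, with
`x² + y² = 0 ⟹ x = y = 0`) with unit `e`.  Then the set `Y = {a² : a ∈ A}` of squares
is a convex cone (closed under addition and nonnegative scalar multiples) satisfying
`Y ∩ (−Y) = {0}` and `A = Y − Y`. -/
theorem stmt_19 {A : Type*} [NonUnitalNonAssocCommRing A] [Module ℝ A]
    [SMulCommClass ℝ A A] [IsScalarTower ℝ A A] [FiniteDimensional ℝ A]
    (hJordan : ∀ x y : A, x * x * y * x = x * x * (y * x))
    (hFR : ∀ x y : A, x * x + y * y = 0 → x = 0 ∧ y = 0)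
    (e : A) (he : ∀ x : A, e * x = x) :
    ∀ Y : Set A, Y = {a | ∃ x : A, a = x * x} →
      (∀ y ∈ Y, ∀ z ∈ Y, y + z ∈ Y) ∧
      (∀ r : ℝ, 0 ≤ r → ∀ y ∈ Y, r • y ∈ Y) ∧
      Y ∩ (-Y) = {0} ∧
      (∀ a : A, ∃ y ∈ Y, ∃ z ∈ Y, a = y - z) := by
  intro Y hY
  have hII : ∀ u x y : A, Lop ((u*x)*y) = Lop (u*x) * Lop y + Lop (y*x) * Lop u + Lop (y*u) * Lop x
      - Lop x * Lop y * Lop u - Lop u * Lop y * Lop x :=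
    fun u x y => IIop (fun u x y t => lemE' hJordan u x y t) u x y
  subst hY
  refine ⟨?_, ?_, ?_, ?_⟩
  · -- closed under addition
    rintro y ⟨p, rfl⟩ z ⟨q, rfl⟩
    set c : A := p * p + q * q with hc
    obtain ⟨n, lam, f, hidem, horth, hne, hrep⟩ := spectral he hJordan hII hFR c
    have hlam : ∀ i, 0 ≤ lam i := by
      intro i
      have hfc : f i * c = lam i • f i := by
        rw [hrep, Finset.mul_sum]
        rw [Finset.sum_eq_single i (fun j _ hji => by
              rw [mul_smul_comm, horth i j (fun h => hji h.symm), smul_zero])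
            (fun h => absurd (Finset.mem_univ i) h)]
        rw [mul_smul_comm, hidem i]
      have h1 : Tr (f i * c) = lam i * Tr (f i) := by rw [hfc, Tr_smul]
      have h2 : Tr (f i * c) = Tr (f i * (p*p)) + Tr (f i * (q*q)) := by
        rw [hc, mul_add, Tr_add]
      have h3 := Tfxx_nonneg he hJordan hII hFR (f i) (hidem i) p
      have h4 := Tfxx_nonneg he hJordan hII hFR (f i) (hidem i) q
      have h5 := Tidem_pos he hJordan hII (f i) (hidem i) (hne i)
      nlinarith
    refine ⟨∑ i, Real.sqrt (lam i) • f i, ?_⟩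
    rw [sq_of_orth _ f hidem horth]
    rw [hrep]
    apply Finset.sum_congr rfl
    intro i _
    rw [Real.mul_self_sqrt (hlam i)]
  · -- closed under nonneg scalars
    rintro r hr y ⟨x, rfl⟩
    exact ⟨Real.sqrt r • x, by rw [smul_mul_smul_comm, Real.mul_self_sqrt hr]⟩
  · -- Y ∩ (-Y) = {0}
    ext w
    simp only [Set.mem_inter_iff, Set.mem_neg, Set.mem_singleton_iff, Set.mem_setOf_eq]
    constructor
    · rintro ⟨⟨x, rfl⟩, ⟨z, hz⟩⟩
      have hsum : x * x + z * z = 0 := by rw [← hz]; abel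
      have := (hFR x z hsum).1
      rw [this, mul_zero]
    · rintro rfl
      exact ⟨⟨0, by rw [mul_zero]⟩, ⟨0, by rw [mul_zero, neg_zero]⟩⟩
  · -- A = Y - Y
    intro a
    refine ⟨((2⁻¹:ℝ)•(a+e)) * ((2⁻¹:ℝ)•(a+e)), ⟨_, rfl⟩,
      ((2⁻¹:ℝ)•(a-e)) * ((2⁻¹:ℝ)•(a-e)), ⟨_, rfl⟩, ?_⟩
    have h1 : (a+e)*(a+e) = a*a + a + a + e := by
      rw [mul_add, add_mul, add_mul, he, mul_comm a e, he, he]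
      abel
    have h2 : (a-e)*(a-e) = a*a - a - a + e := by
      rw [mul_sub, sub_mul, sub_mul, he, mul_comm a e, he, he]
      abel
    rw [smul_mul_smul_comm, smul_mul_smul_comm, h1, h2]
    match_scalars <;> norm_num
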